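/- (Three-graviton celestial bracket identity) Let f₁, f₂, f₃ : ℝ → ℂ be Schwartz functions, let α₁, α₂ > 0 and c ∈ (0,2). Then (1/(2π))² ∫_ℝ ∫_ℝ α₁^{c+1+iλ₁} α₂^{c+1+iλ₂} · M(f₁)(2−c−iλ₁) · M(f₂)(2−c−iλ₂) · M(f₃)(2c+i(λ₁+λ₂)) dλ₁ dλ₂ = α₁³ α₂³ ∫₀^∞ ω³ f₁(α₁ω) f₂(α₂ω) f₃(ω) dω, where M(h)(s) = ∫₀^∞ h(ω) ω^{s−1} dω, and all integrals converge absolutely. -/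

import Mathlib

open MeasureTheory Complex Set
open scoped FourierTransform Real

noncomputable section

namespace CelestialAux

/-- The "atom": `f(exp t) · exp(σ t)` as a complex-valued function. -/
def atom (f : ℝ → ℂ) (σ : ℝ) : ℝ → ℂ := fun t => f (Real.exp t) * ((Real.exp (σ * t) : ℝ) : ℂ)

lemma atom_norm (f : ℝ → ℂ) (σ t : ℝ) :
    ‖atom f σ t‖ = ‖f (Real.exp t)‖ * Real.exp (σ * t) := by
  show ‖f (Real.exp t) * ((Real.exp (σ * t) : ℝ) : ℂ)‖ = _
  rw [norm_mul, Complex.norm_real, Real.norm_eq_abs, abs_of_pos (Real.exp_pos _)]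

lemma atom_continuous (f : SchwartzMap ℝ ℂ) (σ : ℝ) : Continuous (atom (⇑f) σ) := by
  apply (f.continuous.comp Real.continuous_exp).mul
  exact Complex.continuous_ofReal.comp (Real.continuous_exp.comp (continuous_const.mul continuous_id))

lemma atom_bound (f : SchwartzMap ℝ ℂ) {σ : ℝ} (hσ : 0 < σ) :
    ∃ C, 0 ≤ C ∧ (∀ t ≤ 0, ‖atom (⇑f) σ t‖ ≤ C * Real.exp (σ * t)) ∧
      (∀ t, 0 ≤ t → ‖atom (⇑f) σ t‖ ≤ C * Real.exp (-t)) := by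
  obtain ⟨C₀, hC₀⟩ := f.decay' 0 0
  obtain ⟨C₁, hC₁⟩ := f.decay' (⌈σ⌉₊ + 1) 0
  simp only [pow_zero, one_mul, norm_iteratedFDeriv_zero] at hC₀ hC₁
  have hC₀0 : 0 ≤ C₀ := le_trans (norm_nonneg _) (hC₀ 0)
  have hC₁0 : 0 ≤ C₁ := le_trans (by positivity) (hC₁ 1)
  refine ⟨max C₀ C₁, le_trans hC₀0 (le_max_left _ _), ?_, ?_⟩
  · intro t _
    rw [atom_norm]
    have := hC₀ (Real.exp t)
    gcongr
    exact le_trans this (le_max_left _ _)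
  · intro t ht
    rw [atom_norm]
    set k : ℕ := ⌈σ⌉₊ + 1 with hk
    have hkσ : σ + 1 ≤ (k : ℝ) := by
      have := Nat.le_ceil σ
      push_cast [hk]
      linarith
    have h1 : (1 : ℝ) ≤ Real.exp t := Real.one_le_exp ht
    have hfk : ‖f (Real.exp t)‖ ≤ C₁ * Real.exp (-(k : ℝ) * t) := by
      have h := hC₁ (Real.exp t)
      rw [Real.norm_eq_abs, abs_of_pos (Real.exp_pos _)] at h
      have hek : Real.exp t ^ k = Real.exp ((k : ℝ) * t) := by
        rw [← Real.exp_nat_mul]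
      rw [hek] at h
      rw [neg_mul, Real.exp_neg, ← div_eq_mul_inv, le_div_iff₀ (Real.exp_pos _)]
      have h' : Real.exp ((k:ℝ) * t) * ‖f (Real.exp t)‖ ≤ C₁ := h
      linarith
    calc ‖f (Real.exp t)‖ * Real.exp (σ * t)
        ≤ (C₁ * Real.exp (-(k:ℝ) * t)) * Real.exp (σ * t) := by
          gcongr
      _ = C₁ * Real.exp ((σ - k) * t) := by
          rw [mul_assoc, ← Real.exp_add]; ring_nf
      _ ≤ C₁ * Real.exp (-t) := by
          gcongr
          nlinarith [mul_le_mul_of_nonneg_right (by linarith : σ - (k:ℝ) ≤ -1) ht]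
      _ ≤ max C₀ C₁ * Real.exp (-t) := by gcongr; exact le_max_right _ _

lemma atom_bounded (f : SchwartzMap ℝ ℂ) {σ : ℝ} (hσ : 0 < σ) :
    ∃ C, ∀ t, ‖atom (⇑f) σ t‖ ≤ C := by
  obtain ⟨C, hC0, h1, h2⟩ := atom_bound f hσ
  refine ⟨C, fun t => ?_⟩
  rcases le_or_gt t 0 with ht | ht
  · have := h1 t ht
    have : ‖atom (⇑f) σ t‖ ≤ C * Real.exp (σ * t) := this
    refine le_trans this ?_
    nlinarith [Real.exp_le_one_iff.mpr (by nlinarith : σ * t ≤ 0), Real.exp_pos (σ * t)]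
  · refine le_trans (h2 t ht.le) ?_
    nlinarith [Real.exp_le_one_iff.mpr (by linarith : -t ≤ 0), Real.exp_pos (-t)]


lemma integrable_of_expbounds {h : ℝ → ℂ} (hm : AEStronglyMeasurable h volume)
    {a C : ℝ} (ha : 0 < a)
    (h1 : ∀ t ≤ 0, ‖h t‖ ≤ C * Real.exp (a * t))
    (h2 : ∀ t, 0 ≤ t → ‖h t‖ ≤ C * Real.exp (-t)) : Integrable h := by
  have hIoi : IntegrableOn h (Ioi 0) := by
    have hexp : IntegrableOn (fun t : ℝ => Real.exp (-1 * t)) (Ioi 0) :=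
      exp_neg_integrableOn_Ioi 0 one_pos
    have hexp' := hexp.const_mul C
    simp only [neg_one_mul] at hexp'
    refine Integrable.mono' hexp' hm.restrict ?_
    filter_upwards [ae_restrict_mem measurableSet_Ioi] with t ht
    exact h2 t (le_of_lt ht)
  have hIic : IntegrableOn h (Iic 0) := by
    have hbase : IntegrableOn (fun t : ℝ => C * Real.exp (a * t)) (Iic 0) := by
      have h0 : IntegrableOn (fun t : ℝ => Real.exp (-a * t)) (Ioi 0) :=
        exp_neg_integrableOn_Ioi 0 ha
      have h0' : Integrable ((Ioi (0:ℝ)).indicator fun t => Real.exp (-a * t)) :=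
        (integrable_indicator_iff measurableSet_Ioi).mpr h0
      have h0'' := h0'.comp_neg
      have heq : (fun t : ℝ => ((Ioi (0:ℝ)).indicator fun t => Real.exp (-a * t)) (-t))
          = (Iio (0:ℝ)).indicator fun t => Real.exp (a * t) := by
        ext t
        by_cases ht : t < 0
        · rw [Set.indicator_of_mem (by simpa using ht : -t ∈ Ioi (0:ℝ)),
            Set.indicator_of_mem (by simpa using ht)]
          ring_nf
        · rw [Set.indicator_of_notMem (by simpa using ht),
            Set.indicator_of_notMem (by simpa using ht)]
      rw [heq] at h0''
      have : IntegrableOn (fun t : ℝ => Real.exp (a * t)) (Iio 0) :=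
        (integrable_indicator_iff measurableSet_Iio).mp h0''
      have h3 : IntegrableOn (fun t : ℝ => Real.exp (a * t)) (Iic 0) := by
        rw [← Iio_union_Icc_eq_Iic (le_refl (0:ℝ))]
        exact this.union ((integrableOn_Icc_iff_integrableOn_Ioc).mpr
          (Real.continuous_exp.comp (continuous_const.mul continuous_id)).integrableOn_Ioc)
      exact h3.const_mul C
    refine Integrable.mono' hbase hm.restrict ?_
    filter_upwards [ae_restrict_mem measurableSet_Iic] with t ht
    exact h1 t ht
  have : IntegrableOn h (Iic 0 ∪ Ioi 0) := hIic.union hIoi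
  rwa [Iic_union_Ioi, integrableOn_univ] at this

lemma atom_integrable (f : SchwartzMap ℝ ℂ) {σ : ℝ} (hσ : 0 < σ) :
    Integrable (atom (⇑f) σ) := by
  obtain ⟨C, _, h1, h2⟩ := atom_bound f hσ
  exact integrable_of_expbounds (atom_continuous f σ).aestronglyMeasurable hσ h1 h2

lemma atom_hasDerivAt (f : SchwartzMap ℝ ℂ) (σ t : ℝ) :
    HasDerivAt (atom (⇑f) σ)
      (atom (⇑(SchwartzMap.derivCLM ℝ ℂ f)) (σ + 1) t + σ * atom (⇑f) σ t) t := by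
  have hf : HasDerivAt (⇑f) (deriv f (Real.exp t)) (Real.exp t) :=
    (f.differentiableAt (x := Real.exp t)).hasDerivAt
  have h1 : HasDerivAt (fun t : ℝ => f (Real.exp t))
      (Real.exp t • deriv f (Real.exp t)) t :=
    hf.scomp t (Real.hasDerivAt_exp t)
  have h2 : HasDerivAt (fun t : ℝ => ((Real.exp (σ * t) : ℝ) : ℂ))
      ((σ * Real.exp (σ * t) : ℝ) : ℂ) t := by
    have : HasDerivAt (fun t : ℝ => Real.exp (σ * t)) (σ * Real.exp (σ * t)) t := by
      have := (Real.hasDerivAt_exp (σ * t)).comp t ((hasDerivAt_id t).const_mul σ)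
      simpa [mul_comm, Function.comp_def] using this
    exact this.ofReal_comp
  have := h1.mul h2
  convert this using 1
  show _ = _ + f (Real.exp t) * _
  simp only [atom, SchwartzMap.derivCLM_apply]
  rw [show Real.exp ((σ + 1) * t) = Real.exp (σ * t) * Real.exp t by
    rw [← Real.exp_add]; ring_nf]
  simp only [Complex.real_smul]
  push_cast
  ring
  all_goals rfl

lemma atom_deriv (f : SchwartzMap ℝ ℂ) (σ : ℝ) :
    deriv (atom (⇑f) σ)
      = fun t => atom (⇑(SchwartzMap.derivCLM ℝ ℂ f)) (σ + 1) t + σ * atom (⇑f) σ t := by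
  ext t
  exact (atom_hasDerivAt f σ t).deriv

lemma atom_differentiable (f : SchwartzMap ℝ ℂ) (σ : ℝ) :
    Differentiable ℝ (atom (⇑f) σ) :=
  fun t => (atom_hasDerivAt f σ t).differentiableAt

lemma fourier_continuous {g : ℝ → ℂ} (hg : Integrable g) : Continuous (𝓕 g) :=
  VectorFourier.fourierIntegral_continuous Real.continuous_fourierChar
    (by exact (continuous_inner : Continuous fun p : ℝ × ℝ => (inner ℝ p.1 p.2 : ℝ))) hg

lemma fourier_norm_le {g : ℝ → ℂ} (ξ : ℝ) : ‖𝓕 g ξ‖ ≤ ∫ t, ‖g t‖ :=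
  VectorFourier.norm_fourierIntegral_le_integral_norm _ _ _ _ _

lemma integrable_fourier_of_C2 {g : ℝ → ℂ} (hg : Integrable g)
    (hd : Differentiable ℝ g) (hg' : Integrable (deriv g))
    (hd' : Differentiable ℝ (deriv g)) (hg'' : Integrable (deriv (deriv g))) :
    Integrable (𝓕 g) := by
  have h1 : 𝓕 (deriv g) = fun x : ℝ => (2 * ↑π * I * ↑x) • 𝓕 g x :=
    Real.fourier_deriv hg hd hg'
  have h2 : 𝓕 (deriv (deriv g)) = fun x : ℝ => (2 * ↑π * I * ↑x) • 𝓕 (deriv g) x :=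
    Real.fourier_deriv hg' hd' hg''
  set C₀ : ℝ := ∫ t, ‖g t‖ with hC₀
  set C₂ : ℝ := ∫ t, ‖deriv (deriv g) t‖ with hC₂
  have hbound : ∀ x : ℝ, ‖𝓕 g x‖ ≤ (C₀ + C₂) * ((1 + (2 * π * x) ^ 2)⁻¹) := by
    intro x
    have hx2 : ‖𝓕 (deriv (deriv g)) x‖ = (2 * π * |x|) ^ 2 * ‖𝓕 g x‖ := by
      rw [h2]
      simp only [norm_smul, h1]
      have : ‖2 * (π:ℂ) * I * ↑x‖ = 2 * π * |x| := by
        simp only [norm_mul, Complex.norm_real, Complex.norm_I, Real.norm_eq_abs, mul_one]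
        rw [abs_of_pos Real.pi_pos]
        norm_num
      rw [this]; ring
    have hb2 : (2 * π * x) ^ 2 * ‖𝓕 g x‖ ≤ C₂ := by
      have hle := fourier_norm_le (g := deriv (deriv g)) x
      rw [hx2] at hle
      have habs : (2 * π * |x|) ^ 2 = (2 * π * x) ^ 2 := by
        rw [mul_pow, mul_pow, _root_.sq_abs]; ring
      rw [habs] at hle
      exact hle
    have hb0 : ‖𝓕 g x‖ ≤ C₀ := fourier_norm_le x
    have hpos : (0:ℝ) < 1 + (2 * π * x) ^ 2 := by positivity
    rw [← div_eq_mul_inv, le_div_iff₀ hpos]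
    nlinarith [norm_nonneg (𝓕 g x)]
  have hint : Integrable (fun x : ℝ => (C₀ + C₂) * ((1 + (2 * π * x) ^ 2)⁻¹)) := by
    have : Integrable (fun x : ℝ => (1 + x ^ 2)⁻¹) := integrable_inv_one_add_sq
    exact (this.comp_mul_left' (show (2 * π : ℝ) ≠ 0 by positivity)).const_mul _
  exact Integrable.mono' hint (fourier_continuous hg).aestronglyMeasurable
    (Filter.Eventually.of_forall hbound)

lemma atom_fourier_integrable (f : SchwartzMap ℝ ℂ) {σ : ℝ} (hσ : 0 < σ) :
    Integrable (𝓕 (atom (⇑f) σ)) := by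
  set f' := SchwartzMap.derivCLM ℝ ℂ f with hf'
  set f'' := SchwartzMap.derivCLM ℝ ℂ f' with hf''
  have hd1 : deriv (atom (⇑f) σ) = fun t => atom (⇑f') (σ + 1) t + σ * atom (⇑f) σ t :=
    atom_deriv f σ
  have hdd : Differentiable ℝ (deriv (atom (⇑f) σ)) := by
    rw [hd1]
    exact (atom_differentiable f' (σ+1)).add
      ((atom_differentiable f σ).const_mul (σ : ℂ))
  have hd2 : deriv (deriv (atom (⇑f) σ)) = fun t =>
      (atom (⇑f'') (σ + 2) t + ((σ+1 : ℝ) : ℂ) * atom (⇑f') (σ+1) t)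
        + σ * (atom (⇑f') (σ + 1) t + σ * atom (⇑f) σ t) := by
    rw [hd1]
    ext t
    have h1 : HasDerivAt (fun t => atom (⇑f') (σ + 1) t)
        (atom (⇑f'') (σ + 1 + 1) t + ((σ+1 : ℝ) : ℂ) * atom (⇑f') (σ+1) t) t :=
      atom_hasDerivAt f' (σ+1) t
    have h2 : HasDerivAt (fun t => (σ:ℂ) * atom (⇑f) σ t)
        ((σ:ℂ) * (atom (⇑f') (σ + 1) t + σ * atom (⇑f) σ t)) t :=
      (atom_hasDerivAt f σ t).const_mul (σ:ℂ)
    have := (h1.add h2).deriv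
    rw [show deriv (fun t => atom (⇑f') (σ + 1) t + ↑σ * atom (⇑f) σ t) t = _ from this]
    push_cast
    norm_num [add_assoc]
  refine integrable_fourier_of_C2 (atom_integrable f hσ) (atom_differentiable f σ) ?_ hdd ?_
  · rw [hd1]
    exact (atom_integrable f' (by linarith)).add ((atom_integrable f hσ).const_mul _)
  · rw [hd2]
    exact ((atom_integrable f'' (by linarith)).add
      (((atom_integrable f' (by linarith)).const_mul _))).add
      (((atom_integrable f' (by linarith)).add
        ((atom_integrable f hσ).const_mul _)).const_mul _)
lemma exp_deriv_aux : ∀ x ∈ (univ : Set ℝ), HasDerivWithinAt Real.exp (Real.exp x) univ x :=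
  fun x _ => (Real.hasDerivAt_exp x).hasDerivWithinAt

lemma exp_image_aux : Real.exp '' univ = Ioi 0 := by rw [image_univ, Real.range_exp]

lemma exp_injOn_aux : (univ : Set ℝ).InjOn Real.exp := Real.exp_injective.injOn

lemma cov_raw (F : ℝ → ℂ) :
    ∫ ω in Ioi (0:ℝ), F ω = ∫ t : ℝ, Real.exp t • F (Real.exp t) := by
  rw [← exp_image_aux, integral_image_eq_integral_abs_deriv_smul MeasurableSet.univ
    exp_deriv_aux exp_injOn_aux, Measure.restrict_univ]
  congr 1; ext t; rw [abs_of_pos (Real.exp_pos t)]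

lemma cov_int (F : ℝ → ℂ) :
    IntegrableOn F (Ioi 0) ↔ Integrable (fun t => Real.exp t • F (Real.exp t)) := by
  rw [← exp_image_aux, integrableOn_image_iff_integrableOn_abs_deriv_smul MeasurableSet.univ
    exp_deriv_aux exp_injOn_aux]
  have heq : (fun x => |Real.exp x| • F (Real.exp x))
      = fun x => Real.exp x • F (Real.exp x) := by
    ext x; rw [abs_of_pos (Real.exp_pos x)]
  rw [heq, integrableOn_univ]

lemma ofReal_exp_cpow (t : ℝ) (w : ℂ) :
    ((Real.exp t : ℝ) : ℂ) ^ w = Complex.exp (w * t) := by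
  rw [Complex.ofReal_exp, Complex.cpow_def_of_ne_zero (Complex.exp_ne_zero _),
    Complex.log_exp (by simpa using Real.pi_pos) (by simpa using Real.pi_nonneg), mul_comm]

lemma mellin_cov (f : ℝ → ℂ) (s : ℂ) :
    ∫ ω in Ioi (0:ℝ), f ω * (ω:ℂ) ^ (s - 1) = ∫ t : ℝ, f (Real.exp t) * Complex.exp (s * t) := by
  rw [cov_raw]
  congr 1; ext t
  rw [ofReal_exp_cpow, Complex.real_smul, Complex.ofReal_exp]
  rw [show Complex.exp ↑t * (f (Real.exp t) * Complex.exp ((s-1) * ↑t))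
      = f (Real.exp t) * (Complex.exp ↑t * Complex.exp ((s-1) * ↑t)) by ring,
    ← Complex.exp_add]
  congr 2
  ring

lemma mellin_eq_fourier_atom (f : ℝ → ℂ) (σ τ : ℝ) :
    ∫ ω in Ioi (0:ℝ), f ω * (ω:ℂ) ^ (((σ : ℂ) + (τ : ℂ) * Complex.I) - 1)
      = 𝓕 (atom f σ) (-τ / (2 * π)) := by
  rw [mellin_cov, Real.fourier_eq']
  congr 1; ext t
  simp only [smul_eq_mul, RCLike.inner_apply, conj_trivial, atom]
  have harg : (-2 * π * (-τ / (2 * π) * t) : ℝ) = t * τ := by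
    rw [mul_comm (-τ / (2 * π)) t]; field_simp
  rw [harg]
  rw [show ((σ:ℂ) + ↑τ * Complex.I) * ↑t = ↑(σ * t) + ↑(t * τ) * Complex.I by push_cast; ring,
    Complex.exp_add, Complex.ofReal_exp]
  ring

lemma inv_step {g : ℝ → ℂ} (hg : Integrable g) (hFg : Integrable (𝓕 g))
    (hc : Continuous g) (x : ℝ) :
    ∫ l : ℝ, 𝓕 g (l / (2 * π)) * Complex.exp (↑(l * x) * Complex.I)
      = ((2 * π : ℝ) : ℂ) * g x := by
  have key : (fun l : ℝ => 𝓕 g (l / (2 * π)) * Complex.exp (↑(l * x) * Complex.I))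
      = fun l : ℝ =>
        (fun ξ : ℝ => Complex.exp (↑(2 * π * (ξ * x)) * Complex.I) • 𝓕 g ξ) (l / (2 * π)) := by
    ext l
    show _ = cexp (↑(2 * π * (l / (2 * π) * x)) * Complex.I) • 𝓕 g (l / (2 * π))
    rw [smul_eq_mul, mul_comm]
    congr 3
    field_simp
  rw [key, MeasureTheory.Measure.integral_comp_div
    (fun ξ : ℝ => Complex.exp (↑(2 * π * (ξ * x)) * Complex.I) • 𝓕 g ξ) (2 * π)]
  have hinv := Real.fourierInv_eq' (𝓕 g) x
  simp only [RCLike.inner_apply, conj_trivial] at hinv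
  have hinv' : 𝓕⁻ (𝓕 g) x = ∫ v : ℝ, cexp (↑(2 * π * (v * x)) * Complex.I) • 𝓕 g v := by
    rw [hinv]; congr 1; ext v; rw [mul_comm x v]
  rw [← hinv', hg.fourierInv_fourier_eq hFg hc.continuousAt,
    abs_of_pos (by positivity : (0:ℝ) < 2 * π)]
  rw [Complex.real_smul]
lemma exp_I_mul_add (x y : ℝ) :
    Complex.exp (↑x * Complex.I) * Complex.exp (↑y * Complex.I)
      = Complex.exp (↑(x + y) * Complex.I) := by
  rw [← Complex.exp_add]; push_cast; ring_nf

lemma cpow_pos_decomp {α : ℝ} (hα : 0 < α) (c l : ℝ) :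
    (α : ℂ) ^ ((c : ℂ) + 1 + (l : ℂ) * Complex.I)
      = ((α ^ (c + 1) : ℝ) : ℂ) * Complex.exp (↑(l * Real.log α) * Complex.I) := by
  conv_lhs => rw [← Real.exp_log hα]
  rw [ofReal_exp_cpow]
  rw [show ((c:ℂ) + 1 + (l:ℂ) * Complex.I) * ↑(Real.log α)
      = ↑((c + 1) * Real.log α) + ↑(l * Real.log α) * Complex.I by push_cast; ring]
  rw [Complex.exp_add]
  congr 1
  rw [← Complex.ofReal_exp]
  norm_cast
  rw [Real.rpow_def_of_pos hα, mul_comm]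

lemma atom_translate (f : SchwartzMap ℝ ℂ) (σ : ℝ) {α : ℝ} (hα : 0 < α) (t : ℝ) :
    atom (⇑f) σ (t + Real.log α)
      = ((α ^ σ : ℝ) : ℂ) * (f (α * Real.exp t) * ((Real.exp (σ * t) : ℝ) : ℂ)) := by
  show f (Real.exp (t + Real.log α)) * ((Real.exp (σ * (t + Real.log α)) : ℝ) : ℂ) = _
  have h1 : Real.exp (t + Real.log α) = α * Real.exp t := by
    rw [Real.exp_add, Real.exp_log hα, mul_comm]
  have h2 : Real.exp (σ * (t + Real.log α)) = α ^ σ * Real.exp (σ * t) := by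
    rw [Real.rpow_def_of_pos hα, ← Real.exp_add]; ring_nf
  rw [h1, h2]
  push_cast
  ring
end CelestialAux
open CelestialAux in
/-- three-graviton celestial bracket identity: for Schwartz
functions `f₁, f₂, f₃`, `α₁, α₂ > 0` and `c ∈ (0,2)`,
`(1/(2π))² ∬ α₁^{c+1+iλ₁} α₂^{c+1+iλ₂} M(f₁)(2−c−iλ₁) M(f₂)(2−c−iλ₂)
M(f₃)(2c+i(λ₁+λ₂)) dλ₁ dλ₂ = α₁³ α₂³ ∫₀^∞ ω³ f₁(α₁ω) f₂(α₂ω) f₃(ω) dω`,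
all integrals converging absolutely. -/
theorem three_graviton_celestial_bracket (f₁ f₂ f₃ : SchwartzMap ℝ ℂ)
    (α₁ α₂ : ℝ) (hα₁ : 0 < α₁) (hα₂ : 0 < α₂) (c : ℝ) (hc0 : 0 < c) (hc2 : c < 2) :
    let M : (ℝ → ℂ) → ℂ → ℂ := fun h s => ∫ ω in Ioi (0 : ℝ), h ω * (ω : ℂ) ^ (s - 1)
    let F : ℝ → ℝ → ℂ := fun l₁ l₂ =>
      (α₁ : ℂ) ^ ((c : ℂ) + 1 + (l₁ : ℂ) * Complex.I) *
        (α₂ : ℂ) ^ ((c : ℂ) + 1 + (l₂ : ℂ) * Complex.I) *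
        M f₁ ((2 : ℂ) - c - (l₁ : ℂ) * Complex.I) *
        M f₂ ((2 : ℂ) - c - (l₂ : ℂ) * Complex.I) *
        M f₃ ((2 * c : ℂ) + ((l₁ : ℂ) + (l₂ : ℂ)) * Complex.I)
    Integrable (fun p : ℝ × ℝ => F p.1 p.2) ∧
      IntegrableOn
        (fun ω : ℝ => ((ω ^ 3 : ℝ) : ℂ) * f₁ (α₁ * ω) * f₂ (α₂ * ω) * f₃ ω) (Ioi 0) ∧
      ((1 / (2 * Real.pi) : ℝ) : ℂ) ^ 2 * (∫ l₁ : ℝ, ∫ l₂ : ℝ, F l₁ l₂) =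
        ((α₁ ^ 3 * α₂ ^ 3 : ℝ) : ℂ) *
          ∫ ω in Ioi (0 : ℝ), ((ω ^ 3 : ℝ) : ℂ) * f₁ (α₁ * ω) * f₂ (α₂ * ω) * f₃ ω := by
  intro M F
  have hπ : (0:ℝ) < 2 * π := by positivity
  have h2π : (2 * π : ℝ) ≠ 0 := ne_of_gt hπ
  set σ : ℝ := 2 - c with hσdef
  have hσ : 0 < σ := by rw [hσdef]; linarith
  have h2c : 0 < 2 * c := by linarith
  set a₁ : ℝ := Real.log α₁ with ha₁def
  set a₂ : ℝ := Real.log α₂ with ha₂def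
  set g₁ : ℝ → ℂ := atom (⇑f₁) σ with hg₁def
  set g₂ : ℝ → ℂ := atom (⇑f₂) σ with hg₂def
  set g₃ : ℝ → ℂ := atom (⇑f₃) (2*c) with hg₃def
  have hg₁ : Integrable g₁ := atom_integrable f₁ hσ
  have hg₂ : Integrable g₂ := atom_integrable f₂ hσ
  have hg₃ : Integrable g₃ := atom_integrable f₃ h2c
  have hFg₁ : Integrable (𝓕 g₁) := atom_fourier_integrable f₁ hσ
  have hFg₂ : Integrable (𝓕 g₂) := atom_fourier_integrable f₂ hσ
  have hc₁ : Continuous g₁ := atom_continuous f₁ σ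
  have hc₂ : Continuous g₂ := atom_continuous f₂ σ
  have hc₃ : Continuous g₃ := atom_continuous f₃ (2*c)
  have hcF₁ : Continuous (𝓕 g₁) := fourier_continuous hg₁
  have hcF₂ : Continuous (𝓕 g₂) := fourier_continuous hg₂
  have hcF₃ : Continuous (𝓕 g₃) := fourier_continuous hg₃
  have hI1 : Integrable (fun l : ℝ => 𝓕 g₁ (l / (2*π))) := hFg₁.comp_div h2π
  have hI2 : Integrable (fun l : ℝ => 𝓕 g₂ (l / (2*π))) := hFg₂.comp_div h2π
  obtain ⟨Cb₁, hCb₁⟩ := atom_bounded f₁ hσ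
  obtain ⟨Cb₂, hCb₂⟩ := atom_bounded f₂ hσ
  set B₃ : ℝ := ∫ t, ‖g₃ t‖ with hB₃def
  have hB₃ : ∀ w : ℝ, ‖𝓕 g₃ w‖ ≤ B₃ := fun w => fourier_norm_le w
  set A₁ : ℂ := ((α₁ ^ (c+1) : ℝ) : ℂ) with hA₁def
  set A₂ : ℂ := ((α₂ ^ (c+1) : ℝ) : ℂ) with hA₂def
  -- Mellin transforms as Fourier transforms
  have hM₁ : ∀ l : ℝ, M (⇑f₁) ((2:ℂ) - c - l * Complex.I) = 𝓕 g₁ (l / (2*π)) := by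
    intro l
    show (∫ ω in Ioi (0:ℝ), f₁ ω * (ω:ℂ) ^ (((2:ℂ) - c - l * Complex.I) - 1)) = _
    rw [show ((2:ℂ) - c - l * Complex.I) = ((σ:ℂ) + ((-l : ℝ):ℂ) * Complex.I) by
      rw [hσdef]; push_cast; ring]
    rw [mellin_eq_fourier_atom (⇑f₁) σ (-l), neg_neg]
  have hM₂ : ∀ l : ℝ, M (⇑f₂) ((2:ℂ) - c - l * Complex.I) = 𝓕 g₂ (l / (2*π)) := by
    intro l
    show (∫ ω in Ioi (0:ℝ), f₂ ω * (ω:ℂ) ^ (((2:ℂ) - c - l * Complex.I) - 1)) = _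
    rw [show ((2:ℂ) - c - l * Complex.I) = ((σ:ℂ) + ((-l : ℝ):ℂ) * Complex.I) by
      rw [hσdef]; push_cast; ring]
    rw [mellin_eq_fourier_atom (⇑f₂) σ (-l), neg_neg]
  have hM₃ : ∀ l₁ l₂ : ℝ, M (⇑f₃) ((2 * c : ℂ) + ((l₁:ℂ) + (l₂:ℂ)) * Complex.I)
      = 𝓕 g₃ (-(l₁ + l₂) / (2*π)) := by
    intro l₁ l₂
    show (∫ ω in Ioi (0:ℝ), f₃ ω * (ω:ℂ) ^ (((2*c:ℂ) + ((l₁:ℂ)+(l₂:ℂ)) * Complex.I) - 1)) = _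
    rw [show ((2*c:ℂ) + ((l₁:ℂ)+(l₂:ℂ)) * Complex.I)
        = (((2*c : ℝ):ℂ) + ((l₁ + l₂ : ℝ):ℂ) * Complex.I) by push_cast; ring]
    rw [mellin_eq_fourier_atom (⇑f₃) (2*c) (l₁ + l₂)]
  have hFG : ∀ l₁ l₂ : ℝ, F l₁ l₂ =
      (A₁ * Complex.exp (↑(l₁ * a₁) * Complex.I) * 𝓕 g₁ (l₁ / (2*π))) *
        (A₂ * Complex.exp (↑(l₂ * a₂) * Complex.I) * 𝓕 g₂ (l₂ / (2*π))) *
        𝓕 g₃ (-(l₁ + l₂) / (2*π)) := by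
    intro l₁ l₂
    show (α₁ : ℂ) ^ ((c : ℂ) + 1 + (l₁ : ℂ) * Complex.I) *
        (α₂ : ℂ) ^ ((c : ℂ) + 1 + (l₂ : ℂ) * Complex.I) *
        M (⇑f₁) ((2 : ℂ) - c - (l₁ : ℂ) * Complex.I) *
        M (⇑f₂) ((2 : ℂ) - c - (l₂ : ℂ) * Complex.I) *
        M (⇑f₃) ((2 * c : ℂ) + ((l₁ : ℂ) + (l₂ : ℂ)) * Complex.I) = _
    rw [hM₁ l₁, hM₂ l₂, hM₃ l₁ l₂, cpow_pos_decomp hα₁ c l₁, cpow_pos_decomp hα₂ c l₂,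
      ← ha₁def, ← ha₂def, ← hA₁def, ← hA₂def]
    ring
  -- integrability of F on the product space
  have hGcont : Continuous (fun p : ℝ × ℝ =>
      (A₁ * Complex.exp (↑(p.1 * a₁) * Complex.I) * 𝓕 g₁ (p.1 / (2*π))) *
        (A₂ * Complex.exp (↑(p.2 * a₂) * Complex.I) * 𝓕 g₂ (p.2 / (2*π))) *
        𝓕 g₃ (-(p.1 + p.2) / (2*π))) := by fun_prop
  have hint_F : Integrable (fun p : ℝ × ℝ => F p.1 p.2) := by
    have heq : (fun p : ℝ × ℝ => F p.1 p.2) = fun p : ℝ × ℝ =>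
        (A₁ * Complex.exp (↑(p.1 * a₁) * Complex.I) * 𝓕 g₁ (p.1 / (2*π))) *
          (A₂ * Complex.exp (↑(p.2 * a₂) * Complex.I) * 𝓕 g₂ (p.2 / (2*π))) *
          𝓕 g₃ (-(p.1 + p.2) / (2*π)) := funext fun p => hFG p.1 p.2
    rw [heq]
    refine Integrable.mono'
      (g := fun p : ℝ × ℝ => (‖A₁‖ * ‖A₂‖ * B₃) * (‖𝓕 g₁ (p.1 / (2*π))‖ * ‖𝓕 g₂ (p.2 / (2*π))‖))
      ?_ hGcont.aestronglyMeasurable ?_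
    · exact (hI1.norm.mul_prod hI2.norm).const_mul _
    · refine Filter.Eventually.of_forall fun p => ?_
      have h3 := hB₃ (-(p.1 + p.2) / (2*π))
      have hB₃0 : (0:ℝ) ≤ B₃ := le_trans (norm_nonneg _) (hB₃ 0)
      have hone : ∀ x : ℝ, ‖Complex.exp (↑x * Complex.I)‖ = 1 := fun x => by
        rw [Complex.norm_exp_ofReal_mul_I]
      simp only [norm_mul, hone, mul_one]
      calc ‖A₁‖ * ‖𝓕 g₁ (p.1 / (2*π))‖ * (‖A₂‖ * ‖𝓕 g₂ (p.2 / (2*π))‖) * ‖𝓕 g₃ (-(p.1+p.2)/(2*π))‖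
          ≤ ‖A₁‖ * ‖𝓕 g₁ (p.1 / (2*π))‖ * (‖A₂‖ * ‖𝓕 g₂ (p.2 / (2*π))‖) * B₃ := by gcongr
        _ = ‖A₁‖ * ‖A₂‖ * B₃ * (‖𝓕 g₁ (p.1 / (2*π))‖ * ‖𝓕 g₂ (p.2 / (2*π))‖) := by ring
  -- the product function on the line
  have hprod : Integrable (fun t : ℝ => g₃ t * g₂ (t + a₂) * g₁ (t + a₁)) := by
    have h : (fun t : ℝ => g₃ t * g₂ (t + a₂) * g₁ (t + a₁))
        = fun t : ℝ => g₁ (t + a₁) * (g₂ (t + a₂) * g₃ t) := by ext t; ring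
    rw [h]
    refine Integrable.bdd_mul (Integrable.bdd_mul hg₃ ?_ (Filter.Eventually.of_forall fun t => hCb₂ (t + a₂))) ?_
      (Filter.Eventually.of_forall fun t => hCb₁ (t + a₁))
    · exact (hc₂.comp (continuous_id.add continuous_const)).aestronglyMeasurable
    · exact (hc₁.comp (continuous_id.add continuous_const)).aestronglyMeasurable
  -- pointwise identity for the final integrand
  have hpt : ∀ t : ℝ, g₃ t * g₂ (t + a₂) * g₁ (t + a₁)
      = ((α₁ ^ σ : ℝ) : ℂ) * ((α₂ ^ σ : ℝ) : ℂ) *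
        (Real.exp t • (((Real.exp t ^ 3 : ℝ) : ℂ) * f₁ (α₁ * Real.exp t) *
          f₂ (α₂ * Real.exp t) * f₃ (Real.exp t))) := by
    intro t
    simp only [hg₁def, hg₂def, hg₃def, ha₁def, ha₂def]
    rw [atom_translate f₁ σ hα₁ t, atom_translate f₂ σ hα₂ t]
    have hexp4 : Real.exp (σ * t) * Real.exp (σ * t) * Real.exp (2 * c * t)
        = Real.exp t * Real.exp t ^ 3 := by
      rw [hσdef, ← Real.exp_add, ← Real.exp_add,
        show Real.exp t ^ 3 = Real.exp (3 * t) by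
          rw [show (3:ℝ) * t = (3:ℕ) * t by norm_num, Real.exp_nat_mul],
        ← Real.exp_add]
      congr 1; ring
    have hexpC : ((Real.exp (σ * t) : ℝ):ℂ) * ((Real.exp (σ * t) : ℝ):ℂ) *
        ((Real.exp (2 * c * t) : ℝ):ℂ)
        = ((Real.exp t : ℝ):ℂ) * ((Real.exp t : ℝ):ℂ) ^ 3 := by
      exact_mod_cast hexp4
    show f₃ (Real.exp t) * ((Real.exp (2 * c * t) : ℝ):ℂ) * _ * _ = _
    rw [Complex.real_smul,
      show ((Real.exp t ^ 3 : ℝ) : ℂ) = ((Real.exp t : ℝ) : ℂ) ^ 3 from by push_cast; ring]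
    linear_combination (((α₁ ^ σ : ℝ) : ℂ) * ((α₂ ^ σ : ℝ) : ℂ) * f₁ (α₁ * Real.exp t) *
      f₂ (α₂ * Real.exp t) * f₃ (Real.exp t)) * hexpC
  -- conjunct 2
  have hcov := cov_int (fun ω : ℝ => ((ω ^ 3 : ℝ) : ℂ) * f₁ (α₁ * ω) * f₂ (α₂ * ω) * f₃ ω)
  have hα₁σ : ((α₁ ^ σ : ℝ) : ℂ) ≠ 0 := by
    simp only [ne_eq, Complex.ofReal_eq_zero]
    positivity
  have hα₂σ : ((α₂ ^ σ : ℝ) : ℂ) ≠ 0 := by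
    simp only [ne_eq, Complex.ofReal_eq_zero]
    positivity
  have hint2 : IntegrableOn
      (fun ω : ℝ => ((ω ^ 3 : ℝ) : ℂ) * f₁ (α₁ * ω) * f₂ (α₂ * ω) * f₃ ω) (Ioi 0) := by
    rw [hcov]
    have heq : (fun t : ℝ => Real.exp t • ((fun ω : ℝ => ((ω ^ 3 : ℝ) : ℂ) * f₁ (α₁ * ω) *
        f₂ (α₂ * ω) * f₃ ω) (Real.exp t)))
        = fun t : ℝ => (((α₁ ^ σ : ℝ) : ℂ) * ((α₂ ^ σ : ℝ) : ℂ))⁻¹ *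
          (g₃ t * g₂ (t + a₂) * g₁ (t + a₁)) := by
      ext t
      rw [hpt t]
      field_simp
    rw [heq]
    exact hprod.const_mul _
  refine ⟨hint_F, hint2, ?_⟩
  have hone : ∀ x : ℝ, ‖Complex.exp (↑x * Complex.I)‖ = 1 := fun x => by
    rw [Complex.norm_exp_ofReal_mul_I]
  -- step B : inner integral over l₂
  have stepB : ∀ l₁ : ℝ,
      (∫ l₂ : ℝ, (A₂ * Complex.exp (↑(l₂ * a₂) * Complex.I) * 𝓕 g₂ (l₂ / (2*π))) *
          𝓕 g₃ (-(l₁ + l₂) / (2*π)))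
        = A₂ * ((2*π : ℝ) : ℂ) *
            ∫ t : ℝ, g₃ t * g₂ (t + a₂) * Complex.exp (↑(t * l₁) * Complex.I) := by
    intro l₁
    have hexp3 : ∀ l₂ : ℝ, 𝓕 g₃ (-(l₁ + l₂) / (2*π))
        = ∫ t : ℝ, Complex.exp (↑(t * (l₁ + l₂)) * Complex.I) * g₃ t := by
      intro l₂
      rw [Real.fourier_eq']
      congr 1; funext t
      simp only [RCLike.inner_apply, conj_trivial, smul_eq_mul]
      congr 3
      norm_cast
      field_simp
      push_cast [Int.cast_negSucc]
      ring
    set K : ℝ → ℝ → ℂ := fun l₂ t => 𝓕 g₂ (l₂ / (2*π)) *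
      (g₃ t * Complex.exp (↑(t * l₁) * Complex.I) *
        Complex.exp (↑(l₂ * (t + a₂)) * Complex.I)) with hKdef
    have hKint : Integrable (fun p : ℝ × ℝ => K p.1 p.2) := by
      refine Integrable.mono' (g := fun p : ℝ × ℝ => ‖𝓕 g₂ (p.1 / (2*π))‖ * ‖g₃ p.2‖)
        (hI2.norm.mul_prod hg₃.norm) ?_ ?_
      · apply Continuous.aestronglyMeasurable
        simp only [hKdef]
        fun_prop
      · refine Filter.Eventually.of_forall fun p => ?_
        simp only [hKdef, norm_mul, hone, mul_one]
        exact le_of_eq rfl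
    have hswap : Integrable (Function.uncurry K) (volume.prod volume) := by
      rw [← Measure.volume_eq_prod]; exact hKint
    calc (∫ l₂ : ℝ, (A₂ * Complex.exp (↑(l₂ * a₂) * Complex.I) * 𝓕 g₂ (l₂ / (2*π))) *
            𝓕 g₃ (-(l₁ + l₂) / (2*π)))
        = ∫ l₂ : ℝ, A₂ * ∫ t : ℝ, K l₂ t := by
          congr 1; funext l₂
          rw [hexp3 l₂, ← integral_const_mul, ← integral_const_mul]
          congr 1; funext t
          simp only [hKdef]
          have e1 := exp_I_mul_add (l₂ * a₂) (t * (l₁ + l₂))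
          have e2 := exp_I_mul_add (t * l₁) (l₂ * (t + a₂))
          rw [show t * l₁ + l₂ * (t + a₂) = l₂ * a₂ + t * (l₁ + l₂) from by ring] at e2
          linear_combination (A₂ * 𝓕 g₂ (l₂ / (2*π)) * g₃ t) * (e1 - e2)
      _ = A₂ * ∫ l₂ : ℝ, ∫ t : ℝ, K l₂ t := integral_const_mul _ _
      _ = A₂ * ∫ t : ℝ, ∫ l₂ : ℝ, K l₂ t := by rw [integral_integral_swap hswap]
      _ = A₂ * ∫ t : ℝ, (g₃ t * Complex.exp (↑(t * l₁) * Complex.I)) * (((2*π : ℝ) : ℂ) * g₂ (t + a₂)) := by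
          congr 1
          congr 1; funext t
          calc (∫ l₂ : ℝ, K l₂ t)
              = ∫ l₂ : ℝ, (g₃ t * Complex.exp (↑(t * l₁) * Complex.I)) *
                  (𝓕 g₂ (l₂ / (2*π)) * Complex.exp (↑(l₂ * (t + a₂)) * Complex.I)) := by
                congr 1; funext l₂; simp only [hKdef]; ring
            _ = (g₃ t * Complex.exp (↑(t * l₁) * Complex.I)) *
                  ∫ l₂ : ℝ, 𝓕 g₂ (l₂ / (2*π)) * Complex.exp (↑(l₂ * (t + a₂)) * Complex.I) :=
                integral_const_mul _ _
            _ = (g₃ t * Complex.exp (↑(t * l₁) * Complex.I)) * (((2*π : ℝ) : ℂ) * g₂ (t + a₂)) := by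
                rw [inv_step hg₂ hFg₂ hc₂ (t + a₂)]
      _ = A₂ * ((2*π : ℝ) : ℂ) *
            ∫ t : ℝ, g₃ t * g₂ (t + a₂) * Complex.exp (↑(t * l₁) * Complex.I) := by
          rw [mul_assoc, ← integral_const_mul ((2*π : ℝ) : ℂ)
            (fun t : ℝ => g₃ t * g₂ (t + a₂) * Complex.exp (↑(t * l₁) * Complex.I))]
          congr 1
          exact integral_congr_ae (Filter.Eventually.of_forall fun t => by ring)
  -- step C : outer integral over l₁
  have stepC :
      (∫ l₁ : ℝ, (A₁ * Complex.exp (↑(l₁ * a₁) * Complex.I) * 𝓕 g₁ (l₁ / (2*π))) *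
          ∫ t : ℝ, g₃ t * g₂ (t + a₂) * Complex.exp (↑(t * l₁) * Complex.I))
        = A₁ * ((2*π : ℝ) : ℂ) * ∫ t : ℝ, g₃ t * g₂ (t + a₂) * g₁ (t + a₁) := by
    set K' : ℝ → ℝ → ℂ := fun l₁ t => 𝓕 g₁ (l₁ / (2*π)) *
      ((g₃ t * g₂ (t + a₂)) * Complex.exp (↑(l₁ * (t + a₁)) * Complex.I)) with hK'def
    have hK'int : Integrable (fun p : ℝ × ℝ => K' p.1 p.2) := by
      refine Integrable.mono' (g := fun p : ℝ × ℝ => ‖𝓕 g₁ (p.1 / (2*π))‖ * (‖g₃ p.2‖ * Cb₂))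
        (hI1.norm.mul_prod (hg₃.norm.mul_const Cb₂)) ?_ ?_
      · apply Continuous.aestronglyMeasurable
        simp only [hK'def]
        fun_prop
      · refine Filter.Eventually.of_forall fun p => ?_
        simp only [hK'def, norm_mul, hone, mul_one]
        exact mul_le_mul_of_nonneg_left
          (mul_le_mul_of_nonneg_left (hCb₂ (p.2 + a₂)) (norm_nonneg _)) (norm_nonneg _)
    have hswap : Integrable (Function.uncurry K') (volume.prod volume) := by
      rw [← Measure.volume_eq_prod]; exact hK'int
    calc (∫ l₁ : ℝ, (A₁ * Complex.exp (↑(l₁ * a₁) * Complex.I) * 𝓕 g₁ (l₁ / (2*π))) *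
            ∫ t : ℝ, g₃ t * g₂ (t + a₂) * Complex.exp (↑(t * l₁) * Complex.I))
        = ∫ l₁ : ℝ, A₁ * ∫ t : ℝ, K' l₁ t := by
          congr 1; funext l₁
          rw [← integral_const_mul, ← integral_const_mul]
          congr 1; funext t
          simp only [hK'def]
          have e1 := exp_I_mul_add (l₁ * a₁) (t * l₁)
          have e2 : Complex.exp (↑(l₁ * (t + a₁)) * Complex.I)
              = Complex.exp (↑(l₁ * a₁ + t * l₁) * Complex.I) := by
            rw [show l₁ * a₁ + t * l₁ = l₁ * (t + a₁) from by ring]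
          rw [e2]
          linear_combination (A₁ * 𝓕 g₁ (l₁ / (2*π)) * (g₃ t * g₂ (t + a₂))) * e1
      _ = A₁ * ∫ l₁ : ℝ, ∫ t : ℝ, K' l₁ t := integral_const_mul _ _
      _ = A₁ * ∫ t : ℝ, ∫ l₁ : ℝ, K' l₁ t := by rw [integral_integral_swap hswap]
      _ = A₁ * ∫ t : ℝ, (g₃ t * g₂ (t + a₂)) * (((2*π : ℝ) : ℂ) * g₁ (t + a₁)) := by
          congr 1
          congr 1; funext t
          calc (∫ l₁ : ℝ, K' l₁ t)
              = ∫ l₁ : ℝ, (g₃ t * g₂ (t + a₂)) *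
                  (𝓕 g₁ (l₁ / (2*π)) * Complex.exp (↑(l₁ * (t + a₁)) * Complex.I)) := by
                congr 1; funext l₁; simp only [hK'def]; ring
            _ = (g₃ t * g₂ (t + a₂)) *
                  ∫ l₁ : ℝ, 𝓕 g₁ (l₁ / (2*π)) * Complex.exp (↑(l₁ * (t + a₁)) * Complex.I) :=
                integral_const_mul _ _
            _ = (g₃ t * g₂ (t + a₂)) * (((2*π : ℝ) : ℂ) * g₁ (t + a₁)) := by
                rw [inv_step hg₁ hFg₁ hc₁ (t + a₁)]
      _ = A₁ * ((2*π : ℝ) : ℂ) * ∫ t : ℝ, g₃ t * g₂ (t + a₂) * g₁ (t + a₁) := by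
          rw [mul_assoc, ← integral_const_mul ((2*π : ℝ) : ℂ)
            (fun t : ℝ => g₃ t * g₂ (t + a₂) * g₁ (t + a₁))]
          congr 1
          exact integral_congr_ae (Filter.Eventually.of_forall fun t => by ring)
  -- assemble the iterated integral
  have hsplit : (∫ l₁ : ℝ, ∫ l₂ : ℝ, F l₁ l₂)
      = A₂ * ((2*π : ℝ) : ℂ) * (A₁ * ((2*π : ℝ) : ℂ) *
          ∫ t : ℝ, g₃ t * g₂ (t + a₂) * g₁ (t + a₁)) := by
    calc (∫ l₁ : ℝ, ∫ l₂ : ℝ, F l₁ l₂)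
        = ∫ l₁ : ℝ, (A₁ * Complex.exp (↑(l₁ * a₁) * Complex.I) * 𝓕 g₁ (l₁ / (2*π))) *
            (A₂ * ((2*π : ℝ) : ℂ) *
              ∫ t : ℝ, g₃ t * g₂ (t + a₂) * Complex.exp (↑(t * l₁) * Complex.I)) := by
          congr 1; funext l₁
          calc (∫ l₂ : ℝ, F l₁ l₂)
              = ∫ l₂ : ℝ, (A₁ * Complex.exp (↑(l₁ * a₁) * Complex.I) * 𝓕 g₁ (l₁ / (2*π))) *
                  ((A₂ * Complex.exp (↑(l₂ * a₂) * Complex.I) * 𝓕 g₂ (l₂ / (2*π))) *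
                    𝓕 g₃ (-(l₁ + l₂) / (2*π))) := by
                congr 1; funext l₂
                rw [hFG l₁ l₂]; ring
            _ = (A₁ * Complex.exp (↑(l₁ * a₁) * Complex.I) * 𝓕 g₁ (l₁ / (2*π))) *
                  ∫ l₂ : ℝ, (A₂ * Complex.exp (↑(l₂ * a₂) * Complex.I) * 𝓕 g₂ (l₂ / (2*π))) *
                    𝓕 g₃ (-(l₁ + l₂) / (2*π)) := integral_const_mul _ _
            _ = _ := by rw [stepB l₁]
      _ = ∫ l₁ : ℝ, (A₂ * ((2*π : ℝ) : ℂ)) *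
            ((A₁ * Complex.exp (↑(l₁ * a₁) * Complex.I) * 𝓕 g₁ (l₁ / (2*π))) *
              ∫ t : ℝ, g₃ t * g₂ (t + a₂) * Complex.exp (↑(t * l₁) * Complex.I)) := by
          congr 1; funext l₁; ring
      _ = (A₂ * ((2*π : ℝ) : ℂ)) *
            ∫ l₁ : ℝ, (A₁ * Complex.exp (↑(l₁ * a₁) * Complex.I) * 𝓕 g₁ (l₁ / (2*π))) *
              ∫ t : ℝ, g₃ t * g₂ (t + a₂) * Complex.exp (↑(t * l₁) * Complex.I) :=
          integral_const_mul _ _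
      _ = _ := by rw [stepC]
  rw [hsplit]
  have hT : (∫ t : ℝ, g₃ t * g₂ (t + a₂) * g₁ (t + a₁))
      = ((α₁ ^ σ : ℝ) : ℂ) * ((α₂ ^ σ : ℝ) : ℂ) *
        ∫ ω in Ioi (0:ℝ), ((ω ^ 3 : ℝ) : ℂ) * f₁ (α₁ * ω) * f₂ (α₂ * ω) * f₃ ω := by
    rw [cov_raw (fun ω : ℝ => ((ω ^ 3 : ℝ) : ℂ) * f₁ (α₁ * ω) * f₂ (α₂ * ω) * f₃ ω),
      ← integral_const_mul]
    congr 1; funext t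
    exact hpt t
  rw [hT]
  have hr₁ : (α₁ ^ (c+1) : ℝ) * α₁ ^ σ = α₁ ^ 3 := by
    rw [← Real.rpow_add hα₁, show (c + 1) + σ = 3 from by rw [hσdef]; ring,
      show (3:ℝ) = ((3:ℕ):ℝ) from by norm_num, Real.rpow_natCast]
  have hr₂ : (α₂ ^ (c+1) : ℝ) * α₂ ^ σ = α₂ ^ 3 := by
    rw [← Real.rpow_add hα₂, show (c + 1) + σ = 3 from by rw [hσdef]; ring,
      show (3:ℝ) = ((3:ℕ):ℝ) from by norm_num, Real.rpow_natCast]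
  have hA3₁ : A₁ * ((α₁ ^ σ : ℝ) : ℂ) = ((α₁ ^ 3 : ℝ) : ℂ) := by
    rw [hA₁def]; exact_mod_cast congrArg (Complex.ofReal) hr₁
  have hA3₂ : A₂ * ((α₂ ^ σ : ℝ) : ℂ) = ((α₂ ^ 3 : ℝ) : ℂ) := by
    rw [hA₂def]; exact_mod_cast congrArg (Complex.ofReal) hr₂
  have hc2π : ((1 / (2 * π) : ℝ) : ℂ) * ((2 * π : ℝ) : ℂ) = 1 := by
    norm_cast
    field_simp
  calc ((1 / (2 * Real.pi) : ℝ) : ℂ) ^ 2 *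
        (A₂ * ((2*π : ℝ) : ℂ) * (A₁ * ((2*π : ℝ) : ℂ) *
          (((α₁ ^ σ : ℝ) : ℂ) * ((α₂ ^ σ : ℝ) : ℂ) *
            ∫ ω in Ioi (0:ℝ), ((ω ^ 3 : ℝ) : ℂ) * f₁ (α₁ * ω) * f₂ (α₂ * ω) * f₃ ω)))
      = (((1 / (2 * π) : ℝ) : ℂ) * ((2*π : ℝ) : ℂ)) * (((1 / (2 * π) : ℝ) : ℂ) * ((2*π : ℝ) : ℂ)) *
          ((A₁ * ((α₁ ^ σ : ℝ) : ℂ)) * (A₂ * ((α₂ ^ σ : ℝ) : ℂ))) *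
          ∫ ω in Ioi (0:ℝ), ((ω ^ 3 : ℝ) : ℂ) * f₁ (α₁ * ω) * f₂ (α₂ * ω) * f₃ ω := by
        ring
    _ = ((α₁ ^ 3 * α₂ ^ 3 : ℝ) : ℂ) *
          ∫ ω in Ioi (0:ℝ), ((ω ^ 3 : ℝ) : ℂ) * f₁ (α₁ * ω) * f₂ (α₂ * ω) * f₃ ω := by
        rw [hc2π, hA3₁, hA3₂]
        push_cast
        ring
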